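/- Let n be a positive integer. For k = 1, 2, let μ_k ∈ ℝⁿ be a row vector with all entries positive, let R_k be a real n × n matrix with diag(μ_k)·R_k symmetric, let t_k ∈ ℝ, and let P_k, P_k' be n × n permutation matrices. If μ₁P₁ = μ₂P₂ and P₁ᵀ·exp(R₁t₁)·P₁' = P₂ᵀ·exp(R₂t₂)·P₂', then P₁ᵀP₁' = P₂ᵀP₂'. -/

import Mathlib

open Matrix

/-- The permutation matrix of a permutation `σ`. -/
def permMatrix {n : ℕ} (σ : Equiv.Perm (Fin n)) : Matrix (Fin n) (Fin n) ℝ :=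
  Matrix.of fun i j => if σ i = j then 1 else 0

lemma permMatrix_eq {n : ℕ} (σ : Equiv.Perm (Fin n)) :
    permMatrix σ = (σ.toPEquiv.toMatrix : Matrix (Fin n) (Fin n) ℝ) := by
  ext i j
  simp [permMatrix, PEquiv.toMatrix, Equiv.toPEquiv, Option.mem_def, eq_comm]

lemma permMatrix_mul_transpose {n : ℕ} (σ : Equiv.Perm (Fin n)) :
    permMatrix σ * (permMatrix σ)ᵀ = 1 := by
  rw [permMatrix_eq, ← PEquiv.toMatrix_symm, ← Equiv.toPEquiv_symm, ← PEquiv.toMatrix_trans,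
    ← Equiv.toPEquiv_trans, Equiv.self_trans_symm, Equiv.toPEquiv_refl, PEquiv.toMatrix_refl]

lemma transpose_mul_permMatrix {n : ℕ} (σ : Equiv.Perm (Fin n)) :
    (permMatrix σ)ᵀ * permMatrix σ = 1 := by
  rw [permMatrix_eq, ← PEquiv.toMatrix_symm, ← Equiv.toPEquiv_symm, ← PEquiv.toMatrix_trans,
    ← Equiv.toPEquiv_trans, Equiv.symm_trans_self, Equiv.toPEquiv_refl, PEquiv.toMatrix_refl]

lemma vecMul_permMatrix {n : ℕ} (μ : Fin n → ℝ) (σ : Equiv.Perm (Fin n)) :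
    Matrix.vecMul μ (permMatrix σ) = fun j => μ (σ.symm j) := by
  ext j
  simp [Matrix.vecMul, dotProduct, permMatrix, Equiv.apply_eq_iff_eq_symm_apply, mul_ite]

lemma diagonal_vecMul_mul_transpose {n : ℕ} (μ : Fin n → ℝ) (σ : Equiv.Perm (Fin n)) :
    Matrix.diagonal (Matrix.vecMul μ (permMatrix σ)) * (permMatrix σ)ᵀ =
      (permMatrix σ)ᵀ * Matrix.diagonal μ := by
  rw [vecMul_permMatrix]
  ext i j
  simp only [Matrix.diagonal_mul, Matrix.mul_diagonal, Matrix.transpose_apply, permMatrix,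
    Matrix.of_apply]
  by_cases h : σ j = i
  · subst h; simp
  · simp [h]

lemma permW_mul_transpose {n : ℕ} (σ τ : Equiv.Perm (Fin n)) :
    ((permMatrix σ)ᵀ * permMatrix τ) * ((permMatrix σ)ᵀ * permMatrix τ)ᵀ = 1 := by
  rw [Matrix.transpose_mul, Matrix.transpose_transpose, Matrix.mul_assoc,
    ← Matrix.mul_assoc (permMatrix τ), permMatrix_mul_transpose, Matrix.one_mul,
    transpose_mul_permMatrix]

lemma posDef_conj {n : ℕ} {A B : Matrix (Fin n) (Fin n) ℝ} (hA : A.PosDef)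
    (hB : IsUnit B) : (Bᵀ * A * B).PosDef := by
  refine Matrix.PosDef.of_dotProduct_mulVec_pos ?_ ?_
  · have := Matrix.isHermitian_conjTranspose_mul_mul B hA.1
    simpa [Matrix.conjTranspose_eq_transpose_of_trivial] using this
  · intro x hx
    have hBx : B *ᵥ x ≠ 0 := fun h => hx <| by
      have := Matrix.mulVec_injective_iff_isUnit.mpr hB
      exact this (by simpa using h)
    have := hA.dotProduct_mulVec_pos hBx
    simpa [Matrix.dotProduct_mulVec, Matrix.vecMul_transpose, ← Matrix.mulVec_mulVec,
      Matrix.vecMul_vecMul, star_trivial, Matrix.mul_assoc] using this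

lemma posDef_exp_of_isSymm {n : ℕ} {A : Matrix (Fin n) (Fin n) ℝ} (hA : A.IsSymm) :
    (NormedSpace.exp A).PosDef := by
  have hhalf : A = (2⁻¹ : ℝ) • A + (2⁻¹ : ℝ) • A := by
    rw [← add_smul]; norm_num
  have h2 : NormedSpace.exp A =
      (NormedSpace.exp ((2⁻¹ : ℝ) • A))ᵀ * 1 * NormedSpace.exp ((2⁻¹ : ℝ) • A) := by
    rw [mul_one, ← Matrix.exp_transpose, Matrix.transpose_smul, hA.eq]
    conv_lhs => rw [hhalf]
    exact Matrix.exp_add_of_commute _ _ (Commute.refl _)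
  rw [h2]
  exact posDef_conj Matrix.PosDef.one (Matrix.isUnit_exp _)

lemma posDef_diag_mul_exp {n : ℕ} {μ : Fin n → ℝ} (hμ : ∀ i, 0 < μ i)
    {R : Matrix (Fin n) (Fin n) ℝ} (hsym : (Matrix.diagonal μ * R).IsSymm) (t : ℝ) :
    (Matrix.diagonal μ * NormedSpace.exp (t • R)).PosDef := by
  set s : Fin n → ℝ := fun i => Real.sqrt (μ i) with hs_def
  have hs : ∀ i, s i ≠ 0 := fun i => (Real.sqrt_pos.mpr (hμ i)).ne'
  set Dh : Matrix (Fin n) (Fin n) ℝ := Matrix.diagonal s with hDh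
  set Dhi : Matrix (Fin n) (Fin n) ℝ := Matrix.diagonal (fun i => (s i)⁻¹) with hDhi
  have h1 : Dh * Dhi = 1 := by
    rw [hDh, hDhi, Matrix.diagonal_mul_diagonal, ← Matrix.diagonal_one]
    exact congrArg _ (funext fun i => mul_inv_cancel₀ (hs i))
  have h2 : Dhi * Dh = 1 := by
    rw [hDh, hDhi, Matrix.diagonal_mul_diagonal, ← Matrix.diagonal_one]
    exact congrArg _ (funext fun i => inv_mul_cancel₀ (hs i))
  have hDD : Dh * Dh = Matrix.diagonal μ := by
    rw [hDh, Matrix.diagonal_mul_diagonal]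
    exact congrArg _ (funext fun i => Real.mul_self_sqrt (hμ i).le)
  have hUnit : IsUnit Dh := @isUnit_of_invertible _ _ _ (invertibleOfRightInverse _ _ h1)
  have hUnit' : IsUnit Dhi := @isUnit_of_invertible _ _ _ (invertibleOfRightInverse _ _ h2)
  have hinv : Dhi⁻¹ = Dh := Matrix.inv_eq_right_inv h2
  set A : Matrix (Fin n) (Fin n) ℝ := Dh * (t • R) * Dhi with hA_def
  have hArw : A = Dhi * (t • (Matrix.diagonal μ * R)) * Dhi := by
    rw [hA_def, Matrix.mul_smul, Matrix.mul_smul, Matrix.smul_mul, Matrix.smul_mul]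
    congr 1
    rw [← hDD, ← Matrix.mul_assoc, ← Matrix.mul_assoc, h2, Matrix.one_mul]
  have hAsym : A.IsSymm := by
    rw [hArw, Matrix.IsSymm, Matrix.transpose_mul, Matrix.transpose_mul,
      Matrix.transpose_smul, hsym.eq, hDhi, Matrix.diagonal_transpose, Matrix.mul_assoc]
  have hconj : t • R = Dhi * A * Dhi⁻¹ := by
    rw [hinv, hA_def, Matrix.mul_assoc, Matrix.mul_assoc, h2, Matrix.mul_one,
      ← Matrix.mul_assoc, h2, Matrix.one_mul]
  have hexp : NormedSpace.exp (t • R) = Dhi * NormedSpace.exp A * Dh := by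
    rw [hconj, Matrix.exp_conj _ _ hUnit', hinv]
  have final : Matrix.diagonal μ * NormedSpace.exp (t • R) =
      Dhᵀ * NormedSpace.exp A * Dh := by
    rw [hexp, ← hDD, hDh, Matrix.diagonal_transpose, ← hDh]
    simp only [← Matrix.mul_assoc]
    rw [Matrix.mul_assoc Dh Dh Dhi, h1, Matrix.mul_one]
  rw [final]
  exact posDef_conj (posDef_exp_of_isSymm hAsym) hUnit

/-- The product `P₁ᵀP₁'` is determined by `μ₁P₁` and `P₁ᵀ·exp(R₁t₁)·P₁'` when
`diag(μ₁)·R₁` is symmetric and `μ₁` is positive. -/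
theorem perm_product_determined {n : ℕ} (hn : 0 < n)
    (μ₁ μ₂ : Fin n → ℝ) (hμ₁ : ∀ i, 0 < μ₁ i) (hμ₂ : ∀ i, 0 < μ₂ i)
    (R₁ R₂ : Matrix (Fin n) (Fin n) ℝ)
    (hsym₁ : (Matrix.diagonal μ₁ * R₁).IsSymm) (hsym₂ : (Matrix.diagonal μ₂ * R₂).IsSymm)
    (t₁ t₂ : ℝ) (σ₁ σ₁' σ₂ σ₂' : Equiv.Perm (Fin n))
    (hμ : Matrix.vecMul μ₁ (permMatrix σ₁) = Matrix.vecMul μ₂ (permMatrix σ₂))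
    (hM : (permMatrix σ₁)ᵀ * NormedSpace.exp (t₁ • R₁) * permMatrix σ₁' =
      (permMatrix σ₂)ᵀ * NormedSpace.exp (t₂ • R₂) * permMatrix σ₂') :
    (permMatrix σ₁)ᵀ * permMatrix σ₁' = (permMatrix σ₂)ᵀ * permMatrix σ₂' := by
  classical
  set P₁ := permMatrix σ₁ with hP₁
  set P₁' := permMatrix σ₁' with hP₁'
  set P₂ := permMatrix σ₂ with hP₂
  set P₂' := permMatrix σ₂' with hP₂'
  set E₁ := NormedSpace.exp (t₁ • R₁) with hE₁
  set E₂ := NormedSpace.exp (t₂ • R₂) with hE₂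
  set D := Matrix.diagonal (Matrix.vecMul μ₁ P₁) with hD
  have hD1 : D * P₁ᵀ = P₁ᵀ * Matrix.diagonal μ₁ := diagonal_vecMul_mul_transpose μ₁ σ₁
  have hD2 : D * P₂ᵀ = P₂ᵀ * Matrix.diagonal μ₂ := by
    rw [hD, hμ]; exact diagonal_vecMul_mul_transpose μ₂ σ₂
  set B₁ := P₁ᵀ * (Matrix.diagonal μ₁ * E₁) * P₁ with hB₁def
  set B₂ := P₂ᵀ * (Matrix.diagonal μ₂ * E₂) * P₂ with hB₂def
  set W₁ := P₁ᵀ * P₁' with hW₁def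
  set W₂ := P₂ᵀ * P₂' with hW₂def
  have hB₁ : B₁.PosDef := by
    rw [hB₁def]
    exact posDef_conj (posDef_diag_mul_exp hμ₁ hsym₁ t₁)
      (@isUnit_of_invertible _ _ _ (invertibleOfRightInverse _ _ (permMatrix_mul_transpose σ₁)))
  have hB₂ : B₂.PosDef := by
    rw [hB₂def]
    exact posDef_conj (posDef_diag_mul_exp hμ₂ hsym₂ t₂)
      (@isUnit_of_invertible _ _ _ (invertibleOfRightInverse _ _ (permMatrix_mul_transpose σ₂)))
  have cancel₁ : P₁ * (P₁ᵀ * P₁') = P₁' := by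
    rw [← Matrix.mul_assoc, permMatrix_mul_transpose, Matrix.one_mul]
  have cancel₂ : P₂ * (P₂ᵀ * P₂') = P₂' := by
    rw [← Matrix.mul_assoc, permMatrix_mul_transpose, Matrix.one_mul]
  have hX1 : D * (P₁ᵀ * E₁ * P₁') = B₁ * W₁ := by
    calc D * (P₁ᵀ * E₁ * P₁') = D * P₁ᵀ * (E₁ * P₁') := by simp only [Matrix.mul_assoc]
      _ = P₁ᵀ * Matrix.diagonal μ₁ * (E₁ * P₁') := by rw [hD1]
      _ = P₁ᵀ * (Matrix.diagonal μ₁ * E₁) * (P₁ * (P₁ᵀ * P₁')) := by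
          rw [cancel₁]; simp only [Matrix.mul_assoc]
      _ = B₁ * W₁ := by rw [hB₁def, hW₁def]; simp only [Matrix.mul_assoc]
  have hX2 : D * (P₂ᵀ * E₂ * P₂') = B₂ * W₂ := by
    calc D * (P₂ᵀ * E₂ * P₂') = D * P₂ᵀ * (E₂ * P₂') := by simp only [Matrix.mul_assoc]
      _ = P₂ᵀ * Matrix.diagonal μ₂ * (E₂ * P₂') := by rw [hD2]
      _ = P₂ᵀ * (Matrix.diagonal μ₂ * E₂) * (P₂ * (P₂ᵀ * P₂')) := by
          rw [cancel₂]; simp only [Matrix.mul_assoc]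
      _ = B₂ * W₂ := by rw [hB₂def, hW₂def]; simp only [Matrix.mul_assoc]
  have hEq : B₁ * W₁ = B₂ * W₂ := by rw [← hX1, ← hX2, hM]
  have ht₁ : B₁ᵀ = B₁ := by
    rw [← Matrix.conjTranspose_eq_transpose_of_trivial]; exact hB₁.1
  have ht₂ : B₂ᵀ = B₂ := by
    rw [← Matrix.conjTranspose_eq_transpose_of_trivial]; exact hB₂.1
  have hWW₁ : W₁ * W₁ᵀ = 1 := permW_mul_transpose σ₁ σ₁'
  have hWW₂ : W₂ * W₂ᵀ = 1 := permW_mul_transpose σ₂ σ₂'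
  have hsq : B₁ * B₁ = B₂ * B₂ := by
    calc B₁ * B₁ = B₁ * (W₁ * W₁ᵀ) * B₁ᵀ := by rw [hWW₁, Matrix.mul_one, ht₁]
      _ = (B₁ * W₁) * (B₁ * W₁)ᵀ := by
          conv_rhs => rw [Matrix.transpose_mul]
          simp only [ht₁, Matrix.mul_assoc]
      _ = (B₂ * W₂) * (B₂ * W₂)ᵀ := by rw [hEq]
      _ = B₂ * (W₂ * W₂ᵀ) * B₂ᵀ := by
          conv_lhs => rw [Matrix.transpose_mul]
          simp only [ht₂, Matrix.mul_assoc]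
      _ = B₂ * B₂ := by rw [hWW₂, Matrix.mul_one, ht₂]
  have hBB : B₁ = B₂ :=
    open scoped MatrixOrder in (CFC.sq_eq_sq_iff B₁ B₂ hB₁.posSemidef.nonneg
      hB₂.posSemidef.nonneg).mp (by rw [pow_two, pow_two, hsq])
  have hfin : B₁ * W₁ = B₁ * W₂ := by rw [hEq, hBB]
  haveI : Invertible B₁ :=
    Matrix.invertibleOfIsUnitDet B₁ ((Matrix.isUnit_iff_isUnit_det _).mp hB₁.isUnit)
  exact Matrix.mul_right_injective_of_invertible B₁ hfin
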